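/- If (β₀*, β*, α*) is an optimal solution of the STRLS problem min over (β₀, β, α) of (1/2)‖y − β₀·1 − Xβ − α‖₂² + (1/2)T_h(α) + λ‖β‖₁, then (β₀*, β*) is an optimal solution of the SLTS problem min over (β₀, β) of (1/4)·T_h(y − β₀·1 − Xβ) + λ‖β‖₁. -/

import Mathlib

/-- Trimmed squares function. -/
noncomputable def Th (n h : ℕ) (r : Fin n → ℝ) : ℝ :=
  sInf {s : ℝ | ∃ Λ : Finset (Fin n), Λ.card = h ∧ s = ∑ i ∈ Λ, r i ^ 2}

lemma Th_spec (n h : ℕ) (hhn : h ≤ n) (r : Fin n → ℝ) :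
    (∃ Λ : Finset (Fin n), Λ.card = h ∧ Th n h r = ∑ i ∈ Λ, r i ^ 2) ∧
    ∀ Λ : Finset (Fin n), Λ.card = h → Th n h r ≤ ∑ i ∈ Λ, r i ^ 2 := by
  set S := {s : ℝ | ∃ Λ : Finset (Fin n), Λ.card = h ∧ s = ∑ i ∈ Λ, r i ^ 2} with hS
  have hfin : S.Finite := by
    have hsub : S ⊆ (fun Λ : Finset (Fin n) => ∑ i ∈ Λ, r i ^ 2) '' Set.univ := by
      rintro s ⟨Λ, _, rfl⟩; exact ⟨Λ, trivial, rfl⟩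
    exact (Set.finite_univ.image _).subset hsub
  have hne : S.Nonempty := by
    obtain ⟨Λ, _, hcard⟩ := Finset.exists_subset_card_eq (s := (Finset.univ : Finset (Fin n))) (n := h)
      (by simpa using hhn)
    exact ⟨_, Λ, hcard, rfl⟩
  constructor
  · obtain ⟨Λ, h1, h2⟩ := hne.csInf_mem hfin
    exact ⟨Λ, h1, h2⟩
  · intro Λ hΛ
    exact csInf_le hfin.bddBelow ⟨Λ, hΛ, rfl⟩

/-- optimality for STRLS implies optimality of (β₀*, β*) for SLTS. -/
theorem stmt_5 (n d h : ℕ) (hh : 1 ≤ h) (hhn : h ≤ n)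
    (y : Fin n → ℝ) (X : Matrix (Fin n) (Fin d) ℝ) (lam : ℝ) (hlam : 0 < lam)
    (F : ℝ → (Fin d → ℝ) → ℝ)
    (hF : F = fun β₀ β =>
      (1 / 4) * Th n h (fun i => y i - β₀ - X.mulVec β i) + lam * ∑ j, |β j|)
    (L : ℝ → (Fin d → ℝ) → (Fin n → ℝ) → ℝ)
    (hL : L = fun β₀ β α =>
      (1 / 2) * ∑ i, (y i - β₀ - X.mulVec β i - α i) ^ 2 + (1 / 2) * Th n h α
        + lam * ∑ j, |β j|)
    (β₀s : ℝ) (βs : Fin d → ℝ) (αs : Fin n → ℝ)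
    (hopt : ∀ (β₀ : ℝ) (β : Fin d → ℝ) (α : Fin n → ℝ), L β₀s βs αs ≤ L β₀ β α) :
    ∀ (β₀ : ℝ) (β : Fin d → ℝ), F β₀s βs ≤ F β₀ β := by
  intro β₀ β
  set rs : Fin n → ℝ := fun i => y i - β₀s - X.mulVec βs i with hrs
  set r : Fin n → ℝ := fun i => y i - β₀ - X.mulVec β i with hr
  -- minimizing index set for αs
  obtain ⟨⟨Λα, hΛαcard, hΛαeq⟩, _⟩ := Th_spec n h hhn αs
  -- minimizing index set for r
  obtain ⟨⟨Λ, hΛcard, hΛeq⟩, _⟩ := Th_spec n h hhn r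
  -- Step 1 : F β₀s βs ≤ L β₀s βs αs
  have step1 : F β₀s βs ≤ L β₀s βs αs := by
    have hTh : Th n h rs ≤ ∑ i ∈ Λα, rs i ^ 2 := (Th_spec n h hhn rs).2 Λα hΛαcard
    have hpt : ∑ i ∈ Λα, rs i ^ 2 ≤
        ∑ i ∈ Λα, (2 * (rs i - αs i) ^ 2 + 2 * αs i ^ 2) :=
      Finset.sum_le_sum (fun i _ => by nlinarith [sq_nonneg (rs i - 2 * αs i)])
    rw [Finset.sum_add_distrib] at hpt
    have hsub : ∑ i ∈ Λα, (rs i - αs i) ^ 2 ≤ ∑ i, (rs i - αs i) ^ 2 :=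
      Finset.sum_le_sum_of_subset_of_nonneg (Finset.subset_univ _)
        (fun i _ _ => sq_nonneg _)
    have e1 : ∑ i ∈ Λα, 2 * (rs i - αs i) ^ 2 = 2 * ∑ i ∈ Λα, (rs i - αs i) ^ 2 := by
      rw [Finset.mul_sum]
    have e2 : ∑ i ∈ Λα, 2 * αs i ^ 2 = 2 * ∑ i ∈ Λα, αs i ^ 2 := by
      rw [Finset.mul_sum]
    rw [hF, hL]
    simp only [hr, hrs] at *
    linarith [hΛαeq]
  -- Step 2 : choose α achieving the bound for (β₀, β)
  set α : Fin n → ℝ := fun i => if i ∈ Λ then r i / 2 else r i with hα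
  have step2 : L β₀ β α ≤ F β₀ β := by
    have hsum : ∑ i, (r i - α i) ^ 2 = ∑ i ∈ Λ, (r i / 2) ^ 2 := by
      have hcong : ∀ i ∈ Finset.univ, (r i - α i) ^ 2 =
          if i ∈ Λ then (r i / 2) ^ 2 else 0 := by
        intro i _
        by_cases hi : i ∈ Λ <;> simp only [hα, hi, if_true, if_false] <;> ring
      rw [Finset.sum_congr rfl hcong, Finset.sum_ite_mem, Finset.univ_inter]
    have hThα : Th n h α ≤ ∑ i ∈ Λ, α i ^ 2 := (Th_spec n h hhn α).2 Λ hΛcard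
    have hαΛ : ∑ i ∈ Λ, α i ^ 2 = ∑ i ∈ Λ, (r i / 2) ^ 2 :=
      Finset.sum_congr rfl (fun i hi => by simp [hα, hi])
    have hq : ∑ i ∈ Λ, (r i / 2) ^ 2 = (1 / 4) * ∑ i ∈ Λ, r i ^ 2 := by
      rw [Finset.mul_sum]; exact Finset.sum_congr rfl (fun i _ => by ring)
    rw [hF, hL]
    simp only [hr] at *
    linarith [hΛeq]
  exact le_trans step1 (le_trans (hopt β₀ β α) step2)
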